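/- Let R be a semiprime ring with involution and e ∈ R a projection (self-adjoint idempotent). If J is an essential right ideal of eRe, then JR + (1-e)R(eRe)R + (ReR)^⊥ is an essential right ideal of R, where (ReR)^⊥ denotes the annihilator {x ∈ R : xReR = 0}. -/

import Mathlib

/-- Let `R` be a unital semiprime ring with involution and `e ∈ R` a
projection (`e = e* = e²`).  If `J` is an essential right ideal of the corner ring `eRe`,
then `JR + (1-e)R(eRe)R + (ReR)^⊥` (the additive subgroup generated by products
`j*r`, `(1-e)*r*(e*s*e)*t`, and elements of the annihilator `{x | xReR = 0}`) is an
essential right ideal of `R`. -/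
theorem stmt4 {R : Type*} [Ring R] [StarRing R]
    (hsp : ∀ a : R, (∀ r : R, a * r * a = 0) → a = 0)
    (e : R) (he_idem : e * e = e) (he_star : star e = e)
    (J : Set R) (hJ_sub : J ⊆ {y | ∃ r : R, y = e * r * e})
    (hJ_zero : (0 : R) ∈ J)
    (hJ_add : ∀ x ∈ J, ∀ y ∈ J, x + y ∈ J)
    (hJ_neg : ∀ x ∈ J, -x ∈ J)
    (hJ_mul : ∀ x ∈ J, ∀ r : R, x * (e * r * e) ∈ J)
    (hJ_ess : ∀ K : Set R, K ⊆ {y | ∃ r : R, y = e * r * e} → (0 : R) ∈ K →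
      (∀ x ∈ K, ∀ y ∈ K, x + y ∈ K) → (∀ x ∈ K, -x ∈ K) →
      (∀ x ∈ K, ∀ r : R, x * (e * r * e) ∈ K) →
      (∃ k ∈ K, k ≠ 0) → ∃ x ∈ J ∩ K, x ≠ 0) :
    (∀ x ∈ (AddSubgroup.closure
        ({y | ∃ j ∈ J, ∃ r : R, y = j * r} ∪
         {y | ∃ r s t : R, y = (1 - e) * r * (e * s * e) * t} ∪
         {x : R | ∀ r s : R, x * (r * e * s) = 0}) : Set R),
      ∀ r : R, x * r ∈ (AddSubgroup.closure
        ({y | ∃ j ∈ J, ∃ r : R, y = j * r} ∪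
         {y | ∃ r s t : R, y = (1 - e) * r * (e * s * e) * t} ∪
         {x : R | ∀ r s : R, x * (r * e * s) = 0}) : Set R)) ∧
    (∀ K : Set R, (0 : R) ∈ K → (∀ x ∈ K, ∀ y ∈ K, x + y ∈ K) →
      (∀ x ∈ K, -x ∈ K) → (∀ x ∈ K, ∀ r : R, x * r ∈ K) →
      (∃ k ∈ K, k ≠ 0) →
      ∃ x ∈ (AddSubgroup.closure
        ({y | ∃ j ∈ J, ∃ r : R, y = j * r} ∪
         {y | ∃ r s t : R, y = (1 - e) * r * (e * s * e) * t} ∪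
         {x : R | ∀ r s : R, x * (r * e * s) = 0}) : Set R) ∩ K, x ≠ 0) := by
  classical
  set S : Set R := ({y | ∃ j ∈ J, ∃ r : R, y = j * r} ∪
         {y | ∃ r s t : R, y = (1 - e) * r * (e * s * e) * t} ∪
         {x : R | ∀ r s : R, x * (r * e * s) = 0}) with hS
  have hgen : ∀ y ∈ S, ∀ r : R, y * r ∈ S := by
    rintro y (⟨(⟨j, hj, r', rfl⟩ | ⟨a, s, t, rfl⟩)⟩ | hy) r
    · exact Or.inl (Or.inl ⟨j, hj, r' * r, by noncomm_ring⟩)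
    · exact Or.inl (Or.inr ⟨a, s, t * r, by noncomm_ring⟩)
    · refine Or.inr (fun u v => ?_)
      have h := hy (r * u) v
      calc y * r * (u * e * v) = y * (r * u * e * v) := by noncomm_ring
        _ = 0 := h
  have hright : ∀ x ∈ (AddSubgroup.closure S : Set R), ∀ r : R,
      x * r ∈ (AddSubgroup.closure S : Set R) := by
    intro x hx r
    induction hx using AddSubgroup.closure_induction with
    | mem y hy => exact AddSubgroup.subset_closure (hgen y hy r)
    | zero => simpa using (AddSubgroup.closure S).zero_mem
    | add a b _ _ ha hb => simpa [add_mul] using (AddSubgroup.closure S).add_mem ha hb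
    | neg a _ ha => simpa [neg_mul] using (AddSubgroup.closure S).neg_mem ha
  refine ⟨hright, ?_⟩
  intro K hK0 hKadd hKneg hKmul ⟨k0, hk0K, hk0⟩
  by_cases hann : ∀ k ∈ K, ∀ r s : R, k * (r * e * s) = 0
  · exact ⟨k0, ⟨AddSubgroup.subset_closure (Or.inr (hann k0 hk0K)), hk0K⟩, hk0⟩
  push_neg at hann
  obtain ⟨k, hkK, r, s, hkrs⟩ := hann
  set b : R := k * (r * e) with hb
  have hbK : b ∈ K := hKmul k hkK (r * e)
  have hbne : b ≠ 0 := by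
    intro h
    apply hkrs
    have h1 : k * (r * e * s) = b * s := by rw [hb]; noncomm_ring
    rw [h1, h, zero_mul]
  have hbe : b * e = b := by simp only [hb, mul_assoc, he_idem]
  by_cases heb : ∀ r : R, e * (b * r) * e = 0
  · -- then e * b = 0, so b ∈ second generator set
    have hebz : e * b = 0 := by
      apply hsp
      intro r
      have h1 : e * (b * (r * e * b)) * e = e * b * r * (e * b) := by
        have h2 : e * (b * (r * e * b)) * e = e * b * r * (e * (b * e)) := by noncomm_ring
        rw [h2, hbe]
      have h3 := heb (r * e * b)
      rw [h1] at h3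
      exact h3
    have h1e : (1 - e) * b = b := by rw [sub_mul, one_mul, hebz, sub_zero]
    have hbmem : b ∈ S := by
      refine Or.inl (Or.inr ⟨b, 1, 1, ?_⟩)
      have h3 : (1 - e) * b * (e * 1 * e) * 1 = (1 - e) * (b * e * e) := by noncomm_ring
      rw [h3, hbe, hbe, h1e]
    exact ⟨b, ⟨AddSubgroup.subset_closure hbmem, hbK⟩, hbne⟩
  push_neg at heb
  obtain ⟨r0, hr0⟩ := heb
  -- T = e b R e is a nonzero right ideal of eRe
  set T : Set R := {y | ∃ r : R, y = e * (b * r) * e} with hT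
  have hess := hJ_ess T (fun y ⟨r, hr⟩ => ⟨b * r, hr⟩) ⟨0, by simp⟩
    (by rintro x ⟨rx, rfl⟩ y ⟨ry, rfl⟩; exact ⟨rx + ry, by noncomm_ring⟩)
    (by rintro x ⟨rx, rfl⟩; exact ⟨-rx, by noncomm_ring⟩)
    (by
      rintro x ⟨rx, rfl⟩ r
      refine ⟨rx * (e * r), ?_⟩
      have h1 : e * (b * rx) * e * (e * r * e) = e * (b * rx) * (e * e) * (r * e) := by
        noncomm_ring
      rw [h1, he_idem]
      noncomm_ring)
    ⟨e * (b * r0) * e, ⟨r0, rfl⟩, hr0⟩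
  obtain ⟨x, ⟨hxJ, rx, hx⟩, hxne⟩ := hess
  set y : R := b * (rx * e) with hy
  have hyK : y ∈ K := hKmul b hbK (rx * e)
  have hey : e * y = x := by rw [hy, hx]; noncomm_ring
  have hyne : y ≠ 0 := fun h => hxne (by rw [← hey, h, mul_zero])
  have hymem : y ∈ (AddSubgroup.closure S : Set R) := by
    have h2 : (1 - e) * b * (e * rx * e) * 1 = y - e * y := by
      have h3 : (1 - e) * b * (e * rx * e) * 1 = (b * e) * rx * e - e * ((b * e) * rx * e) := by
        noncomm_ring
      rw [h3, hbe, hy]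
      noncomm_ring
    have hdecomp : y = x + (1 - e) * b * (e * rx * e) * 1 := by
      rw [h2, hey]; noncomm_ring
    rw [hdecomp]
    exact (AddSubgroup.closure S).add_mem
      (AddSubgroup.subset_closure (Or.inl (Or.inl ⟨x, hxJ, 1, (mul_one x).symm⟩)))
      (AddSubgroup.subset_closure (Or.inl (Or.inr ⟨b, rx, 1, rfl⟩)))
  exact ⟨y, ⟨hymem, hyK⟩, hyne⟩
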